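/- Composition of partitioned binary relations is associative: for finite sets X, Y, Z, U and PBRs α on (X,Y), β on (Y,Z) and γ on (Z,U), one has γ∘(β∘α) = (γ∘β)∘α. -/

import Mathlib

namespace PBRPaper

/-- A partitioned binary relation (PBR) on `(X, Y)`: a binary relation on
the disjoint union `X ⊕ Y`. -/
abbrev PBR (X Y : Type) : Type := Set ((X ⊕ Y) × (X ⊕ Y))

variable {X Y Z : Type}

/-- The inclusion of `X ⊕ Y` into `X ⊕ Y ⊕ Z`. -/
def ι₁ : X ⊕ Y → X ⊕ Y ⊕ Z := Sum.elim Sum.inl fun y => Sum.inr (Sum.inl y)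

/-- The inclusion of `Y ⊕ Z` into `X ⊕ Y ⊕ Z`. -/
def ι₂ : Y ⊕ Z → X ⊕ Y ⊕ Z :=
  Sum.elim (fun y => Sum.inr (Sum.inl y)) fun z => Sum.inr (Sum.inr z)

/-- The inclusion of `X ⊕ Z` into `X ⊕ Y ⊕ Z`. -/
def ι₀ : X ⊕ Z → X ⊕ Y ⊕ Z := Sum.elim Sum.inl fun z => Sum.inr (Sum.inr z)

/-- Labeled edges in the ambient `X ⊕ Y ⊕ Z`: label `false` means
"an edge of `α`", label `true` means "an edge of `β`". -/
def EdgeMem (α : PBR X Y) (β : PBR Y Z)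
    (e : Bool × (X ⊕ Y ⊕ Z) × (X ⊕ Y ⊕ Z)) : Prop :=
  if e.1 then ∃ p ∈ β, ι₂ p.1 = e.2.1 ∧ ι₂ p.2 = e.2.2
  else ∃ p ∈ α, ι₁ p.1 = e.2.1 ∧ ι₁ p.2 = e.2.2

/-- An `(α,β)`-connected sequence: a nonempty list of labeled edges of `α`/`β`,
no two successive edges from the same PBR, endpoints matching up. -/
def IsConnSeq (α : PBR X Y) (β : PBR Y Z)
    (L : List (Bool × (X ⊕ Y ⊕ Z) × (X ⊕ Y ⊕ Z))) : Prop :=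
  L ≠ [] ∧ (∀ e ∈ L, EdgeMem α β e) ∧
    L.Chain' fun e f => e.1 ≠ f.1 ∧ e.2.2 = f.2.1

/-- `L` is an `(α,β)`-connected sequence connecting `a` to `b`. -/
def ConnectsVia (α : PBR X Y) (β : PBR Y Z)
    (L : List (Bool × (X ⊕ Y ⊕ Z) × (X ⊕ Y ⊕ Z))) (a b : X ⊕ Z) : Prop :=
  IsConnSeq α β L ∧ L.head?.map (fun e => e.2.1) = some (ι₀ a) ∧
    L.getLast?.map (fun e => e.2.2) = some (ι₀ b)

/-- Composition of partitioned binary relations. -/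
def comp (β : PBR Y Z) (α : PBR X Y) : PBR X Z :=
  {p | ∃ L, ConnectsVia α β L p.1 p.2}

/-- The identity PBR `ε_X`, consisting of all edges `(x^(d), x^(c))`
and `(x^(c), x^(d))`. -/
def eps (X : Type) : PBR X X :=
  {p | ∃ x : X, p = (Sum.inl x, Sum.inr x) ∨ p = (Sum.inr x, Sum.inl x)}

/-- A labeled edge is `(α,β)`-frothy if it is an edge of the corresponding PBR
occurring in no `(α,β)`-connected sequence connecting two elements of `X ⊕ Z`. -/
def IsFrothy (α : PBR X Y) (β : PBR Y Z)
    (e : Bool × (X ⊕ Y ⊕ Z) × (X ⊕ Y ⊕ Z)) : Prop :=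
  EdgeMem α β e ∧ ∀ L a b, ConnectsVia α β L a b → e ∉ L

/-- An `(α,β)`-frothy cycle. -/
def IsFrothyCycle (α : PBR X Y) (β : PBR Y Z)
    (L : List (Bool × (X ⊕ Y ⊕ Z) × (X ⊕ Y ⊕ Z))) : Prop :=
  IsConnSeq α β L ∧ 2 ≤ L.length ∧
    L.getLast?.map (fun e => e.2.2) = L.head?.map (fun e => e.2.1) ∧
    L.head?.map (fun e => e.1) ≠ L.getLast?.map (fun e => e.1) ∧
    ∀ e ∈ L, IsFrothy α β e

/-- The type of `(α,β)`-frothy cycles. -/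
def FrothyCycles (α : PBR X Y) (β : PBR Y Z) :=
  {L : List (Bool × (X ⊕ Y ⊕ Z) × (X ⊕ Y ⊕ Z)) // IsFrothyCycle α β L}

/-- `𝔣((α,β))`: the number of equivalence classes of `(α,β)`-frothy cycles,
where the equivalence is generated by elementary equivalence (sharing a common
edge of the same PBR); note that naive equivalence (cyclic permutation) is
subsumed, since a cycle and any of its cyclic permutations share all edges. -/
noncomputable def fPBR (α : PBR X Y) (β : PBR Y Z) : ℕ :=
  Nat.card (Quot fun L L' : FrothyCycles α β => ∃ e, e ∈ L.1 ∧ e ∈ L'.1)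

section WalkMachinery

variable {W W' Λ Λ' : Type}

/-- A walk: a nonempty alternating-ish sequence of labeled edges.
`Walk E D a l m b` : walk from `a` to `b`, first edge label `l`, last label `m`,
consecutive labels satisfying `D`. -/
inductive Walk (E : Λ → W → W → Prop) (D : Λ → Λ → Prop) :
    W → Λ → Λ → W → Prop
  | single {l a b} : E l a b → Walk E D a l l b
  | cons {l l' l'' a b c} : E l a b → D l l' → Walk E D b l' l'' c →
      Walk E D a l l'' c

theorem Walk.append {E : Λ → W → W → Prop} {D : Λ → Λ → Prop}
    {a l m b} (h1 : Walk E D a l m b) :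
    ∀ {l' m' c}, D m l' → Walk E D b l' m' c → Walk E D a l m' c := by
  induction h1 with
  | single h => exact fun hD h2 => .cons h hD h2
  | cons h hd w ih => exact fun hD h2 => .cons h hd (ih hD h2)

theorem Walk.map {E : Λ → W → W → Prop} {D : Λ → Λ → Prop}
    {E' : Λ' → W' → W' → Prop} {D' : Λ' → Λ' → Prop}
    (f : W → W') (g : Λ → Λ')
    (hE : ∀ l u v, E l u v → E' (g l) (f u) (f v))
    (hD : ∀ l m, D l m → D' (g l) (g m))
    {a l m b} (h : Walk E D a l m b) :
    Walk E' D' (f a) (g l) (g m) (f b) := by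
  induction h with
  | single h => exact .single (hE _ _ _ h)
  | cons h hd w ih => exact .cons (hE _ _ _ h) (hD _ _ hd) ih

theorem Walk.rev {E : Λ → W → W → Prop} {D : Λ → Λ → Prop}
    {E' : Λ' → W' → W' → Prop} {D' : Λ' → Λ' → Prop}
    (f : W → W') (g : Λ → Λ')
    (hE : ∀ l u v, E l u v → E' (g l) (f v) (f u))
    (hD : ∀ l m, D l m → D' (g m) (g l))
    {a l m b} (h : Walk E D a l m b) :
    Walk E' D' (f b) (g m) (g l) (f a) := by
  induction h with
  | single h => exact .single (hE _ _ _ h)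
  | cons h hd w ih => exact ih.append (hD _ _ hd) (.single (hE _ _ _ h))

end WalkMachinery

section Bridge

variable {X Y Z : Type} (α : PBR X Y) (β : PBR Y Z)

/-- The labeled edge relation of a pair of PBRs, in curried form. -/
def E0 (l : Bool) (u v : X ⊕ Y ⊕ Z) : Prop := EdgeMem α β (l, u, v)

theorem list_to_walk : ∀ (L) (e : Bool × (X ⊕ Y ⊕ Z) × (X ⊕ Y ⊕ Z)),
    (∀ f ∈ e :: L, EdgeMem α β f) →
    List.Chain' (fun e f => e.1 ≠ f.1 ∧ e.2.2 = f.2.1) (e :: L) →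
    ∃ m g, (e :: L).getLast? = some g ∧ Walk (E0 α β) Ne e.2.1 e.1 m g.2.2 := by
  intro L
  induction L with
  | nil =>
    intro e hmem _
    exact ⟨e.1, e, rfl, .single (hmem e (by simp))⟩
  | cons f L ih =>
    intro e hmem hch
    simp only [List.Chain', List.isChain_cons_cons] at hch
    obtain ⟨⟨hne, heq⟩, hch⟩ := hch
    obtain ⟨m, g, hg, hw⟩ := ih f (fun x hx => hmem x (List.mem_cons_of_mem _ hx)) hch
    refine ⟨m, g, by rw [List.getLast?_cons_cons]; exact hg, ?_⟩
    exact .cons (hmem e (by simp)) hne (heq ▸ hw)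

theorem walk_to_list {u v : X ⊕ Y ⊕ Z} {l m : Bool}
    (h : Walk (E0 α β) Ne u l m v) :
    ∃ L : List (Bool × (X ⊕ Y ⊕ Z) × (X ⊕ Y ⊕ Z)), IsConnSeq α β L ∧
      L.head?.map (fun e => e.2.1) = some u ∧
      L.head?.map (fun e => e.1) = some l ∧
      L.getLast?.map (fun e => e.2.2) = some v := by
  induction h with
  | single h =>
    exact ⟨[(_, _, _)], ⟨by simp, by simpa [E0] using h, List.isChain_singleton _⟩, rfl, rfl, rfl⟩
  | @cons l l' l'' a b c h hd w ih =>
    obtain ⟨L, ⟨hne, hmem, hch⟩, hh1, hh2, hlast⟩ := ih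
    obtain ⟨e, L', rfl⟩ := List.exists_cons_of_ne_nil hne
    simp only [List.head?_cons, Option.map_some] at hh1 hh2
    refine ⟨(l, a, b) :: e :: L', ⟨by simp, ?_, ?_⟩, rfl, rfl, ?_⟩
    · rintro f hf
      rcases List.mem_cons.1 hf with rfl | hf
      · exact h
      · exact hmem f hf
    · simp only [List.Chain', List.isChain_cons_cons]
      refine ⟨⟨?_, ?_⟩, hch⟩
      · simpa [← Option.some_inj.1 hh2] using hd
      · exact (Option.some_inj.1 hh1).symm
    · rw [List.getLast?_cons_cons]; exact hlast

theorem comp_iff_walk (a b : X ⊕ Z) :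
    (a, b) ∈ comp β α ↔ ∃ l m, Walk (E0 α β) Ne (ι₀ a) l m (ι₀ b) := by
  constructor
  · rintro ⟨L, ⟨hne, hmem, hch⟩, hh, hl⟩
    obtain ⟨e, L', rfl⟩ := List.exists_cons_of_ne_nil hne
    obtain ⟨m, g, hg, hw⟩ := list_to_walk α β L' e hmem hch
    simp only [List.head?_cons, Option.map_some] at hh
    rw [hg] at hl
    simp only [Option.map_some] at hl
    refine ⟨e.1, m, ?_⟩
    rw [← Option.some_inj.1 hh, ← Option.some_inj.1 hl]
    exact hw
  · rintro ⟨l, m, hw⟩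
    obtain ⟨L, hseq, hh, _, hl⟩ := walk_to_list α β hw
    exact ⟨L, hseq, hh, hl⟩

end Bridge
section Ternary

/-- Three labels for the three PBRs `α`, `β`, `γ`. -/
inductive Lab3 : Type
  | l0 | l1 | l2
deriving DecidableEq

/-- The four-fold ambient disjoint union. -/
abbrev W4 (X Y Z U : Type) : Type := X ⊕ Y ⊕ Z ⊕ U

variable {X Y Z U : Type}

def eA : X ⊕ Y → W4 X Y Z U :=
  Sum.elim Sum.inl fun y => Sum.inr (Sum.inl y)

def eB : Y ⊕ Z → W4 X Y Z U :=
  Sum.elim (fun y => Sum.inr (Sum.inl y)) fun z => Sum.inr (Sum.inr (Sum.inl z))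

def eC : Z ⊕ U → W4 X Y Z U :=
  Sum.elim (fun z => Sum.inr (Sum.inr (Sum.inl z))) fun u => Sum.inr (Sum.inr (Sum.inr u))

def eD : X ⊕ U → W4 X Y Z U :=
  Sum.elim Sum.inl fun u => Sum.inr (Sum.inr (Sum.inr u))

/-- Labeled edges of the three PBRs inside `W4`. -/
def E3 (α : PBR X Y) (β : PBR Y Z) (γ : PBR Z U) :
    Lab3 → W4 X Y Z U → W4 X Y Z U → Prop
  | .l0, u, v => ∃ p ∈ α, eA p.1 = u ∧ eA p.2 = v
  | .l1, u, v => ∃ p ∈ β, eB p.1 = u ∧ eB p.2 = v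
  | .l2, u, v => ∃ p ∈ γ, eC p.1 = u ∧ eC p.2 = v

/-- Embedding of the inner ambient space `X ⊕ Y ⊕ Z` into `W4`. -/
def emb13 : (X ⊕ Y ⊕ Z) → W4 X Y Z U :=
  Sum.elim Sum.inl
    (Sum.elim (fun y => Sum.inr (Sum.inl y)) fun z => Sum.inr (Sum.inr (Sum.inl z)))

/-- Embedding of the outer ambient space `X ⊕ Z ⊕ U` into `W4`. -/
def lift2 : (X ⊕ Z ⊕ U) → W4 X Y Z U :=
  Sum.elim Sum.inl
    (Sum.elim (fun z => Sum.inr (Sum.inr (Sum.inl z))) fun u => Sum.inr (Sum.inr (Sum.inr u)))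

@[simp] theorem emb13_i1 (w : X ⊕ Y) :
    emb13 (ι₁ (Z := Z) w) = (eA w : W4 X Y Z U) := by cases w <;> rfl

@[simp] theorem emb13_i2 (w : Y ⊕ Z) :
    emb13 (ι₂ (X := X) w) = (eB w : W4 X Y Z U) := by cases w <;> rfl

@[simp] theorem emb13_i0 (w : X ⊕ Z) :
    emb13 (ι₀ (Y := Y) w) = (lift2 (ι₁ (Z := U) w) : W4 X Y Z U) := by cases w <;> rfl

@[simp] theorem lift2_i2 (w : Z ⊕ U) :
    lift2 (ι₂ (X := X) w) = (eC w : W4 X Y Z U) := by cases w <;> rfl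

@[simp] theorem lift2_i0 (w : X ⊕ U) :
    lift2 (ι₀ (Y := Z) w) = (eD w : W4 X Y Z U) := by cases w <;> rfl

theorem emb13_inj : Function.Injective (emb13 : (X ⊕ Y ⊕ Z) → W4 X Y Z U) := by
  rintro (x | y | z) (x' | y' | z') h <;> simp [emb13] at h <;> simp [h]

/-- The label class: which of the two outer slots a `Lab3` label belongs to. -/
def cl : Lab3 → Bool
  | .l0 => false
  | .l1 => false
  | .l2 => true

/-- Inclusion of inner (Bool) labels into `Lab3`. -/
def g01 : Bool → Lab3
  | false => .l0
  | true => .l1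

@[simp] theorem cl_g01 (b : Bool) : cl (g01 b) = false := by cases b <;> rfl

theorem g01_inj : Function.Injective g01 := by
  rintro (_ | _) (_ | _) h <;> simp [g01] at h <;> rfl

theorem g01_ne : ∀ l m : Bool, l ≠ m → Ne (g01 l) (g01 m) :=
  fun _ _ hne hc => hne (g01_inj hc)

variable (α : PBR X Y) (β : PBR Y Z) (γ : PBR Z U)

theorem E0_to_E3 : ∀ (l : Bool) u v, E0 α β l u v →
    E3 α β γ (g01 l) (emb13 u) (emb13 v) := by
  rintro (_ | _) u v h
  · obtain ⟨p, hp, h1, h2⟩ := h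
    exact ⟨p, hp, by simpa using congrArg emb13 h1, by simpa using congrArg emb13 h2⟩
  · obtain ⟨p, hp, h1, h2⟩ := h
    exact ⟨p, hp, by simpa using congrArg emb13 h1, by simpa using congrArg emb13 h2⟩

theorem expandEdge {l : Bool} {u v : X ⊕ Z ⊕ U} (h : E0 (comp β α) γ l u v) :
    ∃ l3 m3, Walk (E3 α β γ) Ne (lift2 u) l3 m3 (lift2 v) ∧ cl l3 = l ∧ cl m3 = l := by
  cases l with
  | true =>
    obtain ⟨p, hp, h1, h2⟩ := h
    exact ⟨.l2, .l2, .single ⟨p, hp, by simpa using congrArg lift2 h1,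
      by simpa using congrArg lift2 h2⟩, rfl, rfl⟩
  | false =>
    obtain ⟨p, hp, h1, h2⟩ := h
    obtain ⟨lb, mb, hw⟩ := (comp_iff_walk α β p.1 p.2).1 hp
    have := hw.map emb13 g01 (E0_to_E3 α β γ) g01_ne
    rw [emb13_i0, emb13_i0, h1, h2] at this
    exact ⟨g01 lb, g01 mb, this, cl_g01 lb, cl_g01 mb⟩

theorem flatten {u v : X ⊕ Z ⊕ U} {l m : Bool}
    (h : Walk (E0 (comp β α) γ) Ne u l m v) :
    ∃ l3 m3, Walk (E3 α β γ) Ne (lift2 u) l3 m3 (lift2 v) ∧ cl l3 = l ∧ cl m3 = m := by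
  induction h with
  | single h => exact expandEdge α β γ h
  | @cons l l' l'' a b c h hd w ih =>
    obtain ⟨l3, m3e, hw1, hcl1, hcl2⟩ := expandEdge α β γ h
    obtain ⟨l3', m3', hw2, hcl1', hcl2'⟩ := ih
    refine ⟨l3, m3', hw1.append ?_ hw2, hcl1, hcl2'⟩
    intro hc
    exact hd (by rw [← hcl2, hc, hcl1'])

end Ternary
section Grouping

variable {X Y Z U : Type}

theorem eA_eq_eD {w : X ⊕ Y} {b : X ⊕ U} (h : (eA w : W4 X Y Z U) = eD b) :
    ∃ x, w = Sum.inl x ∧ b = Sum.inl x := by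
  cases w <;> cases b <;> simp [eA, eD] at h <;> exact ⟨_, rfl, by simp [h]⟩

theorem eB_ne_eD {w : Y ⊕ Z} {b : X ⊕ U} (h : (eB w : W4 X Y Z U) = eD b) : False := by
  cases w <;> cases b <;> simp [eB, eD] at h

theorem eC_eq_eD {w : Z ⊕ U} {b : X ⊕ U} (h : (eC w : W4 X Y Z U) = eD b) :
    ∃ u0, w = Sum.inr u0 ∧ b = Sum.inr u0 := by
  cases w <;> cases b <;> simp [eC, eD] at h <;> exact ⟨_, rfl, by simp [h]⟩

theorem eC_eq_emb13 {w : Z ⊕ U} {v1 : X ⊕ Y ⊕ Z} (h : (eC w : W4 X Y Z U) = emb13 v1) :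
    ∃ z, w = Sum.inl z ∧ v1 = Sum.inr (Sum.inr z) := by
  rcases w with z | u0 <;> rcases v1 with x | y | z' <;> simp [eC, emb13] at h <;>
    exact ⟨_, rfl, by simp [h]⟩

theorem emb13_eq_eD_inl {v1 : X ⊕ Y ⊕ Z} {x : X}
    (h : (emb13 v1 : W4 X Y Z U) = eD (Sum.inl x)) : v1 = Sum.inl x := by
  rcases v1 with x' | y | z <;> simp [emb13, eD] at h <;> simp [h]

theorem emb13_ne_eD_inr {v1 : X ⊕ Y ⊕ Z} {u0 : U}
    (h : (emb13 v1 : W4 X Y Z U) = eD (Sum.inr u0)) : False := by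
  rcases v1 with x' | y | z <;> simp [emb13, eD] at h

variable (α : PBR X Y) (β : PBR Y Z) (γ : PBR Z U)

theorem E0_false_intro {p : (X ⊕ Y) × (X ⊕ Y)} (hp : p ∈ α) :
    E0 α β false (ι₁ p.1) (ι₁ p.2) := ⟨p, hp, rfl, rfl⟩

theorem E0_true_intro {p : (Y ⊕ Z) × (Y ⊕ Z)} (hp : p ∈ β) :
    E0 α β true (ι₂ p.1) (ι₂ p.2) := ⟨p, hp, rfl, rfl⟩

theorem E3_false_elim {l : Lab3} (hcl : cl l = false) {u v : W4 X Y Z U}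
    (h : E3 α β γ l u v) :
    ∃ (u1 v1 : X ⊕ Y ⊕ Z) (lb : Bool), g01 lb = l ∧ emb13 u1 = u ∧ emb13 v1 = v ∧
      E0 α β lb u1 v1 := by
  cases l with
  | l0 =>
    obtain ⟨p, hp, h1, h2⟩ := h
    exact ⟨ι₁ p.1, ι₁ p.2, false, rfl, by rw [emb13_i1]; exact h1,
      by rw [emb13_i1]; exact h2, E0_false_intro α β hp⟩
  | l1 =>
    obtain ⟨p, hp, h1, h2⟩ := h
    exact ⟨ι₂ p.1, ι₂ p.2, true, rfl, by rw [emb13_i2]; exact h1,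
      by rw [emb13_i2]; exact h2, E0_true_intro α β hp⟩
  | l2 => simp [cl] at hcl

/-- The continuation after a maximal inner run ending at `z : Z`. -/
def Tail (z : Z) (b : X ⊕ U) : Prop :=
  ∃ m, Walk (E0 (comp β α) γ) Ne (ι₂ (Sum.inl z)) true m (ι₀ b)

/-- The invariant for grouping a ternary walk ending at `eD b` into an outer walk. -/
def Grouped (u : W4 X Y Z U) (l : Lab3) (b : X ⊕ U) : Prop :=
  (∃ p : Z ⊕ U, l = .l2 ∧ eC p = u ∧
    ∃ m, Walk (E0 (comp β α) γ) Ne (ι₂ p) true m (ι₀ b)) ∨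
  (∃ (u1 : X ⊕ Y ⊕ Z) (lb mb : Bool) (q : X ⊕ Z), emb13 u1 = u ∧ g01 lb = l ∧
    Walk (E0 α β) Ne u1 lb mb (ι₀ q) ∧
    ((∃ x, q = Sum.inl x ∧ b = Sum.inl x) ∨ (∃ z, q = Sum.inr z ∧ Tail α β γ z b)))

theorem group {u : W4 X Y Z U} {l m : Lab3} {w : W4 X Y Z U}
    (h : Walk (E3 α β γ) Ne u l m w) :
    ∀ b, w = eD b → Grouped α β γ u l b := by
  induction h with
  | @single l u v h =>
    intro b hw
    subst hw
    cases l with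
    | l0 =>
      obtain ⟨p, hp, h1, h2⟩ := h
      obtain ⟨x, hp2, rfl⟩ := eA_eq_eD h2
      refine Or.inr ⟨ι₁ p.1, false, false, Sum.inl x, by rw [emb13_i1]; exact h1, rfl, ?_,
        Or.inl ⟨x, rfl, rfl⟩⟩
      have he := E0_false_intro α β hp
      rw [hp2] at he
      exact .single he
    | l1 =>
      obtain ⟨p, hp, h1, h2⟩ := h
      exact absurd h2 (fun hc => eB_ne_eD hc)
    | l2 =>
      obtain ⟨p, hp, h1, h2⟩ := h
      obtain ⟨u0, hp2, rfl⟩ := eC_eq_eD h2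
      refine Or.inl ⟨p.1, rfl, h1, true, .single ?_⟩
      have he := E0_true_intro (comp β α) γ hp
      rw [hp2] at he
      exact he
  | @cons l l' m u v c h hd w ih =>
    intro b hw
    have ihb := ih b hw
    by_cases hcl : cl l = false
    · obtain ⟨u1', v1', lb, hglb, hu1, hv1', hE⟩ := E3_false_elim α β γ hcl h
      rcases ihb with ⟨p', rfl, hpv, mo, hwtail⟩ | ⟨v1, lb', mb, q, hv1, hlb', hwin, hopt⟩
      · obtain ⟨z, hpz, hv1z⟩ := eC_eq_emb13 (hpv.trans hv1'.symm)
        subst hpz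
        refine Or.inr ⟨u1', lb, lb, Sum.inr z, hu1, hglb, .single ?_, Or.inr ⟨z, rfl, mo, hwtail⟩⟩
        rw [hv1z] at hE
        exact hE
      · have hveq : v1' = v1 := emb13_inj (hv1'.trans hv1.symm)
        subst hveq
        refine Or.inr ⟨u1', lb, mb, q, hu1, hglb, .cons hE ?_ hwin, hopt⟩
        intro hc
        exact hd (by rw [← hglb, ← hlb', hc])
    · have hl2 : l = .l2 := by cases l <;> simp_all [cl]
      subst hl2
      obtain ⟨p, hp, h1, h2⟩ := h
      rcases ihb with ⟨p', hl', _⟩ | ⟨v1, lb, mb, q, hv1, hlb, hwin, hopt⟩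
      · exact absurd hl'.symm hd
      · obtain ⟨z, hpz, hv1z⟩ := eC_eq_emb13 (h2.trans hv1.symm)
        have hmem : (Sum.inr z, q) ∈ comp β α := by
          refine (comp_iff_walk α β _ _).2 ⟨lb, mb, ?_⟩
          rw [hv1z] at hwin
          exact hwin
        have hedge : E0 (comp β α) γ false (ι₁ (Sum.inr z)) (ι₁ q) :=
          E0_false_intro (comp β α) γ hmem
        have hγe : E0 (comp β α) γ true (ι₂ p.1) (ι₂ (Sum.inl z)) := by
          have he := E0_true_intro (comp β α) γ hp
          rw [hpz] at he
          exact he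
        refine Or.inl ⟨p.1, rfl, h1, ?_⟩
        rcases hopt with ⟨x, rfl, rfl⟩ | ⟨z', rfl, mo, hwtail⟩
        · exact ⟨false, .cons hγe (by decide) (.single hedge)⟩
        · exact ⟨mo, .cons hγe (by decide) (.cons hedge (by decide) hwtail)⟩

theorem claimA (a b : X ⊕ U) :
    (a, b) ∈ comp γ (comp β α) ↔ ∃ l m, Walk (E3 α β γ) Ne (eD a) l m (eD b) := by
  constructor
  · intro h
    obtain ⟨l, m, hw⟩ := (comp_iff_walk (comp β α) γ a b).1 h
    obtain ⟨l3, m3, hw3, _, _⟩ := flatten α β γ hw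
    rw [lift2_i0, lift2_i0] at hw3
    exact ⟨l3, m3, hw3⟩
  · rintro ⟨l, m, hw⟩
    have hg := group α β γ hw b rfl
    refine (comp_iff_walk (comp β α) γ a b).2 ?_
    cases a with
    | inl x =>
      rcases hg with ⟨p, _, hpe, _⟩ | ⟨u1, lb, mb, q, hu1, _, hwin, hopt⟩
      · exact absurd hpe (by cases p <;> simp [eC, eD])
      · have hu1' : u1 = Sum.inl x := emb13_eq_eD_inl hu1
        subst hu1'
        have hmem : (Sum.inl x, q) ∈ comp β α :=
          (comp_iff_walk α β _ _).2 ⟨lb, mb, hwin⟩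
        have hedge : E0 (comp β α) γ false (ι₁ (Sum.inl x)) (ι₁ q) :=
          E0_false_intro (comp β α) γ hmem
        rcases hopt with ⟨x', rfl, rfl⟩ | ⟨z, rfl, mo, hwtail⟩
        · exact ⟨false, false, .single hedge⟩
        · exact ⟨false, mo, .cons hedge (by decide) hwtail⟩
    | inr u0 =>
      rcases hg with ⟨p, _, hpe, mo, hwtail⟩ | ⟨u1, _, _, _, hu1, _⟩
      · obtain ⟨u0', hpw, hbu⟩ := eC_eq_eD hpe
        obtain rfl : u0' = u0 := by simpa using hbu.symm
        subst hpw
        exact ⟨true, mo, hwtail⟩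
      · exact absurd hu1 (fun hc => emb13_ne_eD_inr hc)

end Grouping
section Duality

variable {X Y Z U : Type}

/-- The reverse of a PBR. -/
def rev (α : PBR X Y) : PBR Y X := {p | (p.2.swap, p.1.swap) ∈ α}

theorem rev_rev (α : PBR X Y) : rev (rev α) = α := by
  ext p
  simp [rev]

/-- Reversal of the ternary ambient space. -/
def σ1 : (X ⊕ Y ⊕ Z) → (Z ⊕ Y ⊕ X) :=
  Sum.elim (fun x => Sum.inr (Sum.inr x))
    (Sum.elim (fun y => Sum.inr (Sum.inl y)) Sum.inl)

@[simp] theorem σ1_i0 (w : X ⊕ Z) : σ1 (ι₀ (Y := Y) w) = ι₀ w.swap := by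
  cases w <;> rfl

@[simp] theorem σ1_i1 (w : X ⊕ Y) : σ1 (ι₁ (Z := Z) w) = ι₂ w.swap := by
  cases w <;> rfl

@[simp] theorem σ1_i2 (w : Y ⊕ Z) : σ1 (ι₂ (X := X) w) = ι₁ w.swap := by
  cases w <;> rfl

variable (α : PBR X Y) (β : PBR Y Z)

theorem E0_rev : ∀ (l : Bool) (u v : X ⊕ Y ⊕ Z), E0 α β l u v →
    E0 (rev β) (rev α) (!l) (σ1 v) (σ1 u) := by
  rintro (_ | _) u v h
  · obtain ⟨p, hp, h1, h2⟩ := h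
    refine ⟨(p.2.swap, p.1.swap), by simp [rev]; exact hp, ?_, ?_⟩
    · simpa using congrArg σ1 h2
    · simpa using congrArg σ1 h1
  · obtain ⟨p, hp, h1, h2⟩ := h
    refine ⟨(p.2.swap, p.1.swap), by simp [rev]; exact hp, ?_, ?_⟩
    · simpa using congrArg σ1 h2
    · simpa using congrArg σ1 h1

theorem not_ne : ∀ l m : Bool, l ≠ m → (!m) ≠ (!l) := by decide

theorem comp_rev_mp (a b : X ⊕ Z) (h : (a, b) ∈ comp β α) :
    (b.swap, a.swap) ∈ comp (rev α) (rev β) := by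
  obtain ⟨l, m, hw⟩ := (comp_iff_walk α β a b).1 h
  refine (comp_iff_walk (rev β) (rev α) _ _).2 ⟨!m, !l, ?_⟩
  have hr := hw.rev σ1 (fun b => !b) (E0_rev α β) not_ne
  rw [σ1_i0, σ1_i0] at hr
  exact hr

theorem comp_rev : comp (rev α) (rev β) = rev (comp β α) := by
  ext p
  constructor
  · intro h
    have hh := comp_rev_mp (rev β) (rev α) p.1 p.2 h
    rw [rev_rev, rev_rev] at hh
    exact hh
  · intro h
    have hh := comp_rev_mp α β p.2.swap p.1.swap h
    simpa using hh

end Duality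

section Mirror

variable {X Y Z U : Type}

/-- Reversal of the four-fold ambient space. -/
def μ4 : W4 X Y Z U → W4 U Z Y X :=
  Sum.elim (fun x => Sum.inr (Sum.inr (Sum.inr x)))
    (Sum.elim (fun y => Sum.inr (Sum.inr (Sum.inl y)))
      (Sum.elim (fun z => Sum.inr (Sum.inl z)) Sum.inl))

/-- Reversal of the three labels. -/
def ρ3 : Lab3 → Lab3
  | .l0 => .l2
  | .l1 => .l1
  | .l2 => .l0

theorem ρ3_ne : ∀ l m : Lab3, l ≠ m → Ne (ρ3 m) (ρ3 l) := by
  rintro (_ | _ | _) (_ | _ | _) h hc <;> simp_all [ρ3]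

@[simp] theorem μ4_eA (w : X ⊕ Y) :
    μ4 (eA (Z := Z) (U := U) w) = eC w.swap := by cases w <;> rfl

@[simp] theorem μ4_eB (w : Y ⊕ Z) :
    μ4 (eB (X := X) (U := U) w) = eB w.swap := by cases w <;> rfl

@[simp] theorem μ4_eC (w : Z ⊕ U) :
    μ4 (eC (X := X) (Y := Y) w) = eA w.swap := by cases w <;> rfl

@[simp] theorem μ4_eD (w : X ⊕ U) :
    μ4 (eD (Y := Y) (Z := Z) w) = eD w.swap := by cases w <;> rfl

variable (α : PBR X Y) (β : PBR Y Z) (γ : PBR Z U)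

theorem E3_rev : ∀ (l : Lab3) (u v : W4 X Y Z U), E3 α β γ l u v →
    E3 (rev γ) (rev β) (rev α) (ρ3 l) (μ4 v) (μ4 u) := by
  rintro (_ | _ | _) u v h <;> obtain ⟨p, hp, h1, h2⟩ := h
  · exact ⟨(p.2.swap, p.1.swap), by simp [rev]; exact hp,
      by rw [← h2, μ4_eA], by rw [← h1, μ4_eA]⟩
  · exact ⟨(p.2.swap, p.1.swap), by simp [rev]; exact hp,
      by rw [← h2, μ4_eB], by rw [← h1, μ4_eB]⟩
  · exact ⟨(p.2.swap, p.1.swap), by simp [rev]; exact hp,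
      by rw [← h2, μ4_eC], by rw [← h1, μ4_eC]⟩

theorem mirror (a b : X ⊕ U)
    (h : ∃ l m, Walk (E3 α β γ) Ne (eD a) l m (eD b)) :
    ∃ l m, Walk (E3 (rev γ) (rev β) (rev α)) Ne (eD b.swap) l m (eD a.swap) := by
  obtain ⟨l, m, hw⟩ := h
  have hr := hw.rev μ4 ρ3 (E3_rev α β γ) ρ3_ne
  rw [μ4_eD, μ4_eD] at hr
  exact ⟨ρ3 m, ρ3 l, hr⟩

theorem assoc_mp (a b : X ⊕ U) (h : (a, b) ∈ comp γ (comp β α)) :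
    (a, b) ∈ comp (comp γ β) α := by
  have h1 := (claimA α β γ a b).1 h
  have h2 := mirror α β γ a b h1
  have h3 := (claimA (rev γ) (rev β) (rev α) b.swap a.swap).2 h2
  rw [comp_rev β γ, comp_rev α (comp γ β)] at h3
  simpa [rev] using h3

end Mirror
/-- Composition of partitioned binary relations is associative. -/
theorem pbr_comp_assoc (X Y Z U : Type)
    [Fintype X] [Fintype Y] [Fintype Z] [Fintype U]
    (α : PBR X Y) (β : PBR Y Z) (γ : PBR Z U) :
    comp γ (comp β α) = comp (comp γ β) α := by
  ext p
  obtain ⟨a, b⟩ := p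
  constructor
  · exact assoc_mp α β γ a b
  · intro h
    have h1 := comp_rev_mp α (comp γ β) a b h
    rw [← comp_rev β γ] at h1
    have h2 := assoc_mp (rev γ) (rev β) (rev α) b.swap a.swap h1
    rw [comp_rev α β, comp_rev (comp β α) γ] at h2
    simpa [rev] using h2

end PBRPaper
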